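/- Let w : (0, ∞) → [0, ∞) be locally integrable with W(t) = ∫₀ᵗ w(s) ds positive for t > 0, and suppose there is a constant A such that W(s)(1 + log(r/s)) ≤ A W(r) for all 0 < s ≤ r (equivalently, the dilation function satisfies a logarithmic decay at 0). Then w ∈ B*_∞: ∫₀ʳ (W(t)/t) dt ≤ C W(r) for all r > 0, for some constant C depending only on A. -/

import Mathlib

open MeasureTheory

section Aux
open Set Filter Topology

-- FTC computation: ∫ over Ioc ε r of (t * (1 + log r - log t)^2)⁻¹ ≤ 1, plus integrability
lemma aux_ftc (r ε : ℝ) (hε : 0 < ε) (hεr : ε ≤ r) :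
    IntegrableOn (fun t => (t * (1 + Real.log r - Real.log t)^2)⁻¹) (Set.Ioc ε r) ∧
    (∫ t in Set.Ioc ε r, (t * (1 + Real.log r - Real.log t)^2)⁻¹) ≤ 1 := by
  have hr : 0 < r := lt_of_lt_of_le hε hεr
  set g : ℝ → ℝ := fun t => (t * (1 + Real.log r - Real.log t)^2)⁻¹ with hg
  have hu : ∀ t ∈ Set.Icc ε r, (1:ℝ) ≤ 1 + Real.log r - Real.log t := by
    intro t ht
    have : Real.log t ≤ Real.log r := Real.log_le_log (lt_of_lt_of_le hε ht.1) ht.2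
    linarith
  have hgc : ContinuousOn g (Set.Icc ε r) := by
    apply ContinuousOn.inv₀
    · exact continuousOn_id.mul (((continuousOn_const.sub
        (Real.continuousOn_log.mono (fun t ht => ne_of_gt (lt_of_lt_of_le hε ht.1)))).pow 2))
    · intro t ht
      have h1 := hu t ht
      have h2 : (0:ℝ) < t := lt_of_lt_of_le hε ht.1
      positivity
  have hgint : IntegrableOn g (Set.Ioc ε r) :=
    (hgc.integrableOn_Icc).mono_set Set.Ioc_subset_Icc_self
  refine ⟨hgint, ?_⟩
  have hderiv : ∀ t ∈ Set.uIcc ε r,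
      HasDerivAt (fun t => (1 + Real.log r - Real.log t)⁻¹) (g t) t := by
    intro t ht
    rw [Set.uIcc_of_le hεr] at ht
    have h2 : (0:ℝ) < t := lt_of_lt_of_le hε ht.1
    have huD : HasDerivAt (fun t => 1 + Real.log r - Real.log t) (-t⁻¹) t := by
      have h := (hasDerivAt_const t (1 + Real.log r)).sub (Real.hasDerivAt_log h2.ne')
      rw [zero_sub] at h
      exact h
    have hne : 1 + Real.log r - Real.log t ≠ 0 := by have := hu t ht; linarith
    have := huD.inv hne
    refine this.congr_deriv ?_
    rw [hg]
    field_simp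
  have hii : IntervalIntegrable g volume ε r := by
    apply ContinuousOn.intervalIntegrable
    rwa [Set.uIcc_of_le hεr]
  have := intervalIntegral.integral_eq_sub_of_hasDerivAt hderiv hii
  rw [intervalIntegral.integral_of_le hεr] at this
  rw [this]
  have hFε : 0 ≤ (1 + Real.log r - Real.log ε)⁻¹ := by
    have := hu ε ⟨le_refl _, hεr⟩; positivity
  have : (1 + Real.log r - Real.log r)⁻¹ = 1 := by simp
  rw [this]
  linarith


lemma aux_double (W : ℝ → ℝ) (A : ℝ) (hA : 0 < A)
    (hWpos : ∀ t > (0 : ℝ), 0 < W t)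
    (hlog : ∀ s r : ℝ, 0 < s → s ≤ r → W s * (1 + Real.log (r / s)) ≤ A * W r)
    (r t : ℝ) (ht : 0 < t) (htr : t ≤ r) :
    W t * (1 + Real.log (r/t))^2 ≤ 4*A^2 * W r := by
  have hr : 0 < r := lt_of_lt_of_le ht htr
  set m := Real.sqrt (t*r) with hm
  have hm0 : 0 < m := Real.sqrt_pos.mpr (by positivity)
  have htm : t ≤ m := by
    have h := Real.sqrt_le_sqrt (show t*t ≤ t*r by nlinarith)
    rwa [Real.sqrt_mul_self ht.le] at h
  have hmr : m ≤ r := by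
    have h := Real.sqrt_le_sqrt (show t*r ≤ r*r by nlinarith)
    rwa [Real.sqrt_mul_self hr.le] at h
  have hsq : (m/t)^2 = r/t := by
    rw [hm, div_pow, Real.sq_sqrt (by positivity)]
    field_simp
  have hmt : m / t = Real.sqrt (r/t) := by
    rw [← hsq, Real.sqrt_sq (by positivity)]
  have hsq2 : (r/m)^2 = r/t := by
    rw [div_pow, hm, Real.sq_sqrt (by positivity)]
    field_simp
  have hrm : r / m = Real.sqrt (r/t) := by
    rw [← hsq2, Real.sqrt_sq (by positivity)]
  set L := Real.log (r/t) with hL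
  have hL0 : 0 ≤ L := Real.log_nonneg ((one_le_div ht).mpr htr)
  have hlog1 : Real.log (m/t) = L/2 := by
    rw [hmt, Real.log_sqrt (by positivity)]
  have hlog2 : Real.log (r/m) = L/2 := by
    rw [hrm, Real.log_sqrt (by positivity)]
  have h1 := hlog t m ht htm
  have h2 := hlog m r hm0 hmr
  rw [hlog1] at h1
  rw [hlog2] at h2
  have hWt := (hWpos t ht).le
  have hWm := (hWpos m hm0).le
  have hWr := (hWpos r hr).le
  nlinarith [mul_le_mul_of_nonneg_right h1 (by linarith : (0:ℝ) ≤ 1 + L/2),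
    mul_le_mul_of_nonneg_left h2 hA.le, mul_nonneg hWt hL0, sq_nonneg L]


lemma aux_main (w W : ℝ → ℝ) (A : ℝ) (hA : 0 < A)
    (hw : ∀ t ∈ Set.Ioi (0 : ℝ), 0 ≤ w t)
    (hwint : ∀ r > (0 : ℝ), IntegrableOn w (Set.Ioc 0 r))
    (hW : ∀ t, W t = ∫ s in Set.Ioc (0 : ℝ) t, w s)
    (hWpos : ∀ t > (0 : ℝ), 0 < W t)
    (hdouble : ∀ r t : ℝ, 0 < t → t ≤ r → W t * (1 + Real.log (r/t))^2 ≤ 4*A^2 * W r)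
    (haux : ∀ r ε : ℝ, 0 < ε → ε ≤ r →
      IntegrableOn (fun t => (t * (1 + Real.log r - Real.log t)^2)⁻¹) (Set.Ioc ε r) ∧
      (∫ t in Set.Ioc ε r, (t * (1 + Real.log r - Real.log t)^2)⁻¹) ≤ 1) :
    ∃ C > (0 : ℝ), ∀ r > (0 : ℝ), (∫ t in Set.Ioc (0 : ℝ) r, W t / t) ≤ C * W r := by
  -- W is monotone, hence measurable
  have hWmono : Monotone W := by
    intro s t hst
    rw [hW s, hW t]
    rcases le_or_gt t 0 with h | h
    · rw [Set.Ioc_eq_empty (by simp [not_lt]; linarith), Set.Ioc_eq_empty (by simp [not_lt, h])]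
    · apply setIntegral_mono_set (hwint t h)
      · rw [EventuallyLE, ae_restrict_iff' measurableSet_Ioc]
        filter_upwards with x hx using hw x hx.1
      · exact (Set.Ioc_subset_Ioc_right hst).eventuallyLE
  have hWmeas : Measurable W := hWmono.measurable
  have hfmeas : Measurable (fun t : ℝ => W t / t) := hWmeas.div measurable_id
  refine ⟨4*A^2, by positivity, ?_⟩
  intro r hr
  set B := 4*A^2 * W r with hB
  -- key: bound over Ioc ε r, plus integrability there
  have key : ∀ ε : ℝ, 0 < ε → ε ≤ r →
      IntegrableOn (fun t => W t / t) (Set.Ioc ε r) ∧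
      (∫ t in Set.Ioc ε r, W t / t) ≤ B := by
    intro ε hε hεr
    obtain ⟨hgint, hgval⟩ := haux r ε hε hεr
    set g : ℝ → ℝ := fun t => (t * (1 + Real.log r - Real.log t)^2)⁻¹ with hg
    have hptwise : ∀ t ∈ Set.Ioc ε r, W t / t ≤ B * g t := by
      intro t ht
      have ht0 : 0 < t := lt_of_lt_of_le hε ht.1.le
      have hlogrw : Real.log (r/t) = Real.log r - Real.log t :=
        Real.log_div hr.ne' ht0.ne'
      have hk := hdouble r t ht0 ht.2
      rw [hlogrw] at hk
      have hX : (1:ℝ) ≤ 1 + (Real.log r - Real.log t) := by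
        have : Real.log t ≤ Real.log r := Real.log_le_log ht0 ht.2
        linarith
      have hXpos : (0:ℝ) < (1 + Real.log r - Real.log t)^2 := pow_pos (by linarith) 2
      have hXeq : 1 + (Real.log r - Real.log t) = 1 + Real.log r - Real.log t := by ring
      rw [hXeq] at hk
      have hgpos : (0:ℝ) < t * (1 + Real.log r - Real.log t)^2 := mul_pos ht0 hXpos
      have hBg : B * g t = B / (t * (1 + Real.log r - Real.log t)^2) := by
        rw [hg, div_eq_mul_inv]
      rw [hBg, div_le_div_iff₀ ht0 hgpos]
      nlinarith [mul_le_mul_of_nonneg_left hk ht0.le]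
    have hBnn : 0 ≤ B := by have := (hWpos r hr).le; rw [hB]; positivity
    have hgnn : ∀ t ∈ Set.Ioc ε r, 0 ≤ W t / t := by
      intro t ht
      have ht0 : 0 < t := lt_of_lt_of_le hε ht.1.le
      exact div_nonneg (hWpos t ht0).le ht0.le
    have hfint : IntegrableOn (fun t => W t / t) (Set.Ioc ε r) := by
      apply Integrable.mono' (hgint.const_mul B) hfmeas.aestronglyMeasurable.restrict
      rw [ae_restrict_iff' measurableSet_Ioc]
      filter_upwards with t ht
      rw [Real.norm_of_nonneg (hgnn t ht)]
      exact hptwise t ht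
    refine ⟨hfint, ?_⟩
    calc (∫ t in Set.Ioc ε r, W t / t) ≤ ∫ t in Set.Ioc ε r, B * g t :=
          setIntegral_mono_on hfint (hgint.const_mul B) measurableSet_Ioc hptwise
      _ = B * ∫ t in Set.Ioc ε r, g t := by rw [integral_const_mul]
      _ ≤ B * 1 := mul_le_mul_of_nonneg_left hgval hBnn
      _ = B := mul_one B
  -- AECover argument
  set a : ℕ → ℝ := fun n => r / (n + 1) with ha
  have ha0 : ∀ n, 0 < a n := fun n => by positivity
  have har : ∀ n, a n ≤ r := fun n => by
    rw [ha]
    exact div_le_self hr.le (le_add_of_nonneg_left (Nat.cast_nonneg n))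
  have hatend : Tendsto a atTop (𝓝 0) := by
    apply Tendsto.div_atTop (tendsto_const_nhds)
    exact tendsto_atTop_add_const_right _ 1 tendsto_natCast_atTop_atTop
  have hφ : AECover (volume.restrict (Set.Ioc (0:ℝ) r)) atTop (fun n => Set.Ioc (a n) r) :=
    MeasureTheory.aecover_Ioc_of_Ioc hatend tendsto_const_nhds
  have hsub : ∀ n, Set.Ioc (a n) r ⊆ Set.Ioc (0:ℝ) r := fun n =>
    Set.Ioc_subset_Ioc_left (ha0 n).le
  have hfi : ∀ n, IntegrableOn (fun t => W t / t) (Set.Ioc (a n) r)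
      (volume.restrict (Set.Ioc (0:ℝ) r)) := by
    intro n
    rw [IntegrableOn, Measure.restrict_restrict measurableSet_Ioc,
      Set.inter_eq_left.mpr (hsub n)]
    exact (key (a n) (ha0 n) (har n)).1
  have hnng : ∀ᵐ x ∂(volume.restrict (Set.Ioc (0:ℝ) r)), 0 ≤ W x / x := by
    rw [ae_restrict_iff' measurableSet_Ioc]
    filter_upwards with t ht
    exact div_nonneg (hWpos t ht.1).le ht.1.le
  have hbound : ∀ n, (∫ x in Set.Ioc (a n) r, W x / x
      ∂(volume.restrict (Set.Ioc (0:ℝ) r))) ≤ B := by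
    intro n
    rw [Measure.restrict_restrict measurableSet_Ioc, Set.inter_eq_left.mpr (hsub n)]
    exact (key (a n) (ha0 n) (har n)).2
  have hInt : Integrable (fun t => W t / t) (volume.restrict (Set.Ioc (0:ℝ) r)) :=
    hφ.integrable_of_integral_bounded_of_nonneg_ae B hfi hnng (Eventually.of_forall hbound)
  have htend := hφ.integral_tendsto_of_countably_generated hInt
  exact le_of_tendsto htend (Eventually.of_forall hbound)
end Aux

/-- Conversely, the logarithmic decay `W(s)(1 + log(r/s)) ≤ A W(r)` for `0 < s ≤ r`
implies the `B*_∞` condition `∫₀ʳ W(t)/t dt ≤ C W(r)` for all `r > 0`. -/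
theorem stmt_7 (w W : ℝ → ℝ) (A : ℝ) (hA : 0 < A)
    (hw : ∀ t ∈ Set.Ioi (0 : ℝ), 0 ≤ w t)
    (hwint : ∀ r > (0 : ℝ), IntegrableOn w (Set.Ioc 0 r))
    (hW : ∀ t, W t = ∫ s in Set.Ioc (0 : ℝ) t, w s)
    (hWpos : ∀ t > (0 : ℝ), 0 < W t)
    (hlog : ∀ s r : ℝ, 0 < s → s ≤ r → W s * (1 + Real.log (r / s)) ≤ A * W r) :
    ∃ C > (0 : ℝ), ∀ r > (0 : ℝ), (∫ t in Set.Ioc (0 : ℝ) r, W t / t) ≤ C * W r :=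
  aux_main w W A hA hw hwint hW hWpos
    (fun r t ht htr => aux_double W A hA hWpos hlog r t ht htr)
    (fun r ε hε hεr => aux_ftc r ε hε hεr)
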